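/- Let (X⁺, T) be a transitive locally compact one-sided countable Markov shift, φ a λ-transient potential with summable variations, and μ a λ-conformal Radon measure (L_φ*μ = λμ). Then for every compact set F ⊆ X⁺, the set F_∞ = {x ∈ X⁺ : Tⁿx ∈ F for infinitely many n ≥ 0} has μ-measure zero. -/

import Mathlib

open MeasureTheory ENNReal Filter Topology

variable {S : Type*}

/-- The one-sided topological Markov shift over alphabet `S` with transition relation `Adj`. -/
abbrev MShift (Adj : S → S → Prop) : Type _ :=
  {x : ℕ → S // ∀ i, Adj (x i) (x (i + 1))}

/-- The left shift map. -/
def shiftMap (Adj : S → S → Prop) (x : MShift Adj) : MShift Adj :=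
  ⟨fun i => x.1 (i + 1), fun i => x.2 (i + 1)⟩

/-- The Ruelle (transfer) operator on non-negative functions. -/
noncomputable def Ruelle (Adj : S → S → Prop) (φ : MShift Adj → ℝ)
    (f : MShift Adj → ℝ≥0∞) (x : MShift Adj) : ℝ≥0∞ :=
  ∑' y : {y : MShift Adj // shiftMap Adj y = x}, ENNReal.ofReal (Real.exp (φ y.1)) * f y.1

/-- The Green's function `G(f, x | λ) = Σ_n λ⁻ⁿ (L_φⁿ f)(x)`. -/
noncomputable def Green (Adj : S → S → Prop) (φ : MShift Adj → ℝ) (lam : ℝ)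
    (f : MShift Adj → ℝ≥0∞) (x : MShift Adj) : ℝ≥0∞ :=
  ∑' n : ℕ, ENNReal.ofReal ((lam ^ n)⁻¹) * ((Ruelle Adj φ)^[n] f) x

/-- The cylinder set `[a] = {x : x₀ = a}`. -/
def cylA (Adj : S → S → Prop) (a : S) : Set (MShift Adj) := {x | x.1 0 = a}

/-- Indicator function of the cylinder `[a]`. -/
noncomputable def cylInd (Adj : S → S → Prop) (a : S) : MShift Adj → ℝ≥0∞ :=
  (cylA Adj a).indicator 1

/-- Topological transitivity: every state can be reached from every state. -/
def TransitiveShift (Adj : S → S → Prop) : Prop :=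
  ∀ a b : S, ∃ (n : ℕ) (x : MShift Adj), x.1 0 = a ∧ ((shiftMap Adj)^[n] x).1 0 = b

/-- Local compactness: each state has finitely many followers. -/
def LocFin (Adj : S → S → Prop) : Prop := ∀ a : S, {b : S | Adj a b}.Finite

/-- Set of values `|φ(x) − φ(y)|` over pairs agreeing in their first `m` coordinates. -/
def varSet (Adj : S → S → Prop) (φ : MShift Adj → ℝ) (m : ℕ) : Set ℝ :=
  {r | ∃ x y : MShift Adj, (∀ i < m, x.1 i = y.1 i) ∧ r = |φ x - φ y|}

/-- The `m`-th variation of `φ`. -/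
noncomputable def Var (Adj : S → S → Prop) (φ : MShift Adj → ℝ) (m : ℕ) : ℝ :=
  sSup (varSet Adj φ m)

/-- `φ` has summable variations. -/
def SummableVar (Adj : S → S → Prop) (φ : MShift Adj → ℝ) : Prop :=
  (∀ m, BddAbove (varSet Adj φ m)) ∧ Summable (Var Adj φ)

/-- A non-negative real function viewed as `ℝ≥0∞`-valued. -/
noncomputable def ofR {Adj : S → S → Prop} (f : MShift Adj → ℝ) : MShift Adj → ℝ≥0∞ :=
  fun x => ENNReal.ofReal (f x)

/-- `λ`-transience: the Green's function of every cylinder is finite everywhere. -/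
def Transient (Adj : S → S → Prop) (φ : MShift Adj → ℝ) (lam : ℝ) : Prop :=
  ∀ (a : S) (x : MShift Adj), Green Adj φ lam (cylInd Adj a) x ≠ ⊤

/-- The set of points whose orbit visits `F` infinitely often. -/
def visitsInfinitelyOften (Adj : S → S → Prop) (F : Set (MShift Adj)) : Set (MShift Adj) :=
  {x | ∀ N : ℕ, ∃ n ≥ N, (shiftMap Adj)^[n] x ∈ F}

section A
variable (Adj : S → S → Prop)

lemma measurable_evalM [MeasurableSpace S] (i : ℕ) :
    Measurable fun x : MShift Adj => x.1 i :=
  (measurable_pi_apply i).comp measurable_subtype_coe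

lemma measurableSet_allS [Countable S] [MeasurableSpace S] [MeasurableSingletonClass S]
    (s : Set S) : MeasurableSet s := s.to_countable.measurableSet

lemma measurable_shiftMap [MeasurableSpace S] : Measurable (shiftMap Adj) :=
  Measurable.subtype_mk (measurable_pi_lambda _ fun i => measurable_evalM Adj (i + 1))

def consM (c : S) (x : MShift Adj) (h : Adj c (x.1 0)) : MShift Adj :=
  ⟨fun i => Nat.rec c (fun j _ => x.1 j) i, by
    intro i
    cases i with
    | zero => exact h
    | succ j => exact x.2 j⟩

lemma shift_consM (c : S) (x : MShift Adj) (h : Adj c (x.1 0)) :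
    shiftMap Adj (consM Adj c x h) = x := Subtype.ext rfl

def fiberEquiv (x : MShift Adj) :
    {y : MShift Adj // shiftMap Adj y = x} ≃ {c : S // Adj c (x.1 0)} where
  toFun y := ⟨y.1.1 0, by
    have h1 : y.1.1 1 = x.1 0 := congrArg (fun z : MShift Adj => z.1 0) y.2
    have h2 := y.1.2 0
    rwa [h1] at h2⟩
  invFun c := ⟨consM Adj c.1 x c.2, shift_consM Adj c.1 x c.2⟩
  left_inv y := by
    apply Subtype.ext
    apply Subtype.ext
    funext i
    cases i with
    | zero => rfl
    | succ j => exact (congrArg (fun z : MShift Adj => z.1 j) y.2).symm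
  right_inv c := rfl

open Classical in
noncomputable def RT (φ : MShift Adj → ℝ) (f : MShift Adj → ℝ≥0∞) (c : S)
    (x : MShift Adj) : ℝ≥0∞ :=
  if h : Adj c (x.1 0) then
    ENNReal.ofReal (Real.exp (φ (consM Adj c x h))) * f (consM Adj c x h) else 0

lemma Ruelle_eq_sum (φ : MShift Adj → ℝ) (f : MShift Adj → ℝ≥0∞) (x : MShift Adj) :
    Ruelle Adj φ f x = ∑' c : S, RT Adj φ f c x := by
  rw [Ruelle, ← Equiv.tsum_eq (fiberEquiv Adj x).symm
    (fun y => ENNReal.ofReal (Real.exp (φ y.1)) * f y.1)]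
  have h1 : ∀ c : {c : S // Adj c (x.1 0)},
      ENNReal.ofReal (Real.exp (φ ((fiberEquiv Adj x).symm c).1)) *
        f ((fiberEquiv Adj x).symm c).1 = RT Adj φ f c.1 x := by
    intro c
    simp only [fiberEquiv, Equiv.coe_fn_symm_mk, RT, dif_pos c.2]
    rfl
  rw [tsum_congr h1]
  have h2 : Function.support (fun c => RT Adj φ f c x) ⊆ {c | Adj c (x.1 0)} := by
    intro c hc
    simp only [Function.mem_support, RT] at hc
    by_contra h
    exact hc (dif_neg h)
  exact tsum_subtype_eq_of_support_subset h2

end A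
section B
variable (Adj : S → S → Prop)

lemma measurable_consM [MeasurableSpace S] (c : S) :
    Measurable fun z : {x : MShift Adj // Adj c (x.1 0)} => consM Adj c z.1 z.2 := by
  apply Measurable.subtype_mk
  apply measurable_pi_lambda
  intro i
  cases i with
  | zero => exact measurable_const
  | succ j => exact (measurable_evalM Adj j).comp measurable_subtype_coe

lemma measurable_RT [Countable S] [MeasurableSpace S] [MeasurableSingletonClass S]
    (φ : MShift Adj → ℝ) (f : MShift Adj → ℝ≥0∞)
    (hφ : Measurable φ) (hf : Measurable f) (c : S) : Measurable (RT Adj φ f c) := by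
  have hs : MeasurableSet {x : MShift Adj | Adj c (x.1 0)} :=
    measurable_evalM Adj 0 (measurableSet_allS {s | Adj c s})
  have hcons : Measurable fun z : {x : MShift Adj | Adj c (x.1 0)} => consM Adj c z.1 z.2 :=
    measurable_consM Adj c
  have hmain : Measurable fun z : {x : MShift Adj | Adj c (x.1 0)} =>
      ENNReal.ofReal (Real.exp (φ (consM Adj c z.1 z.2))) * f (consM Adj c z.1 z.2) :=
    ((ENNReal.measurable_ofReal.comp (Real.measurable_exp.comp (hφ.comp hcons))).mul
      (hf.comp hcons))
  classical
  exact Measurable.dite hmain measurable_const hs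

lemma measurable_Ruelle [Countable S] [MeasurableSpace S] [MeasurableSingletonClass S]
    (φ : MShift Adj → ℝ) (f : MShift Adj → ℝ≥0∞)
    (hφ : Measurable φ) (hf : Measurable f) : Measurable (Ruelle Adj φ f) := by
  have : Ruelle Adj φ f = fun x => ∑' c : S, RT Adj φ f c x :=
    funext fun x => Ruelle_eq_sum Adj φ f x
  rw [this]
  exact Measurable.ennreal_tsum fun c => measurable_RT Adj φ f hφ hf c

lemma measurable_iterRuelle [Countable S] [MeasurableSpace S] [MeasurableSingletonClass S]
    (φ : MShift Adj → ℝ) (f : MShift Adj → ℝ≥0∞)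
    (hφ : Measurable φ) (hf : Measurable f) (n : ℕ) :
    Measurable ((Ruelle Adj φ)^[n] f) := by
  induction n with
  | zero => exact hf
  | succ n ih =>
    rw [Function.iterate_succ_apply']
    exact measurable_Ruelle Adj φ _ hφ ih
end B
section C
variable (Adj : S → S → Prop) (φ : MShift Adj → ℝ)

lemma abs_sub_le_Var (hvar : SummableVar Adj φ) (m : ℕ) {x y : MShift Adj}
    (hxy : ∀ i < m, x.1 i = y.1 i) : |φ x - φ y| ≤ Var Adj φ m :=
  le_csSup (hvar.1 m) ⟨x, y, hxy, rfl⟩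

lemma Var_nonneg (hvar : SummableVar Adj φ) [Nonempty (MShift Adj)] (m : ℕ) :
    0 ≤ Var Adj φ m := by
  obtain ⟨x⟩ := ‹Nonempty (MShift Adj)›
  have : |φ x - φ x| ≤ Var Adj φ m := abs_sub_le_Var Adj φ hvar m (fun _ _ => rfl)
  simpa using this

lemma measurableSet_cylW [Countable S] [MeasurableSpace S] [MeasurableSingletonClass S]
    (m : ℕ) (w : Fin m → S) :
    MeasurableSet {x : MShift Adj | ∀ i : Fin m, x.1 i.1 = w i} := by
  have heq : {x : MShift Adj | ∀ i : Fin m, x.1 i.1 = w i} =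
      ⋂ i : Fin m, (fun x : MShift Adj => x.1 i.1) ⁻¹' {w i} := by
    ext x; simp [Set.mem_iInter]
  rw [heq]
  exact MeasurableSet.iInter fun i => measurable_evalM Adj i.1 (measurableSet_allS {w i})

lemma measurable_phi [Countable S] [MeasurableSpace S] [MeasurableSingletonClass S]
    (hvar : SummableVar Adj φ) : Measurable φ := by
  rcases isEmpty_or_nonempty (MShift Adj) with hE | hNE
  · intro s _
    rw [Set.eq_empty_of_isEmpty (φ ⁻¹' s)]
    exact MeasurableSet.empty
  apply measurable_of_isOpen
  intro U hU
  have key : φ ⁻¹' U = ⋃ (p : Σ m : ℕ, Fin m → S)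
      (_ : {y : MShift Adj | ∀ i : Fin p.1, y.1 i.1 = p.2 i} ⊆ φ ⁻¹' U),
      {y : MShift Adj | ∀ i : Fin p.1, y.1 i.1 = p.2 i} := by
    apply Set.Subset.antisymm
    · intro x hx
      obtain ⟨ε, hε, hball⟩ := Metric.isOpen_iff.1 hU (φ x) hx
      have htends : Tendsto (Var Adj φ) atTop (nhds 0) := hvar.2.tendsto_atTop_zero
      obtain ⟨m, hm⟩ := (htends.eventually (gt_mem_nhds hε)).exists
      refine Set.mem_iUnion₂.2 ⟨⟨m, fun i => x.1 i.1⟩, ?_, fun i => rfl⟩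
      intro y hy
      apply hball
      rw [Metric.mem_ball, Real.dist_eq]
      calc |φ y - φ x| ≤ Var Adj φ m :=
            abs_sub_le_Var Adj φ hvar m (fun i hi => hy ⟨i, hi⟩)
        _ < ε := hm
    · exact Set.iUnion₂_subset fun p hp => hp
  rw [key]
  exact MeasurableSet.biUnion (Set.to_countable _)
    (fun p _ => measurableSet_cylW Adj p.1 p.2)
end C
section D
variable (Adj : S → S → Prop) (φ : MShift Adj → ℝ)

lemma cylInd_agree (a : S) {x y : MShift Adj} (h : x.1 0 = y.1 0) :
    cylInd Adj a x = cylInd Adj a y := by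
  unfold cylInd
  by_cases hx : x ∈ cylA Adj a
  · have hy : y ∈ cylA Adj a := h.symm.trans hx
    rw [Set.indicator_of_mem hx, Set.indicator_of_mem hy]
    rfl
  · have hy : y ∉ cylA Adj a := fun hy => hx (h.trans hy)
    rw [Set.indicator_of_notMem hx, Set.indicator_of_notMem hy]

lemma ruelle_step (hvar : SummableVar Adj φ) {m : ℕ} (hm : 1 ≤ m) {x y : MShift Adj}
    (hxy : ∀ i < m, x.1 i = y.1 i) (f : MShift Adj → ℝ≥0∞) (K : ℝ≥0∞)
    (hf : ∀ x' y' : MShift Adj, (∀ i < m + 1, x'.1 i = y'.1 i) → f x' ≤ K * f y') :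
    Ruelle Adj φ f x ≤
      ENNReal.ofReal (Real.exp (Var Adj φ (m + 1))) * K * Ruelle Adj φ f y := by
  set C := ENNReal.ofReal (Real.exp (Var Adj φ (m + 1))) with hC
  rw [Ruelle_eq_sum Adj φ f x, Ruelle_eq_sum Adj φ f y, mul_assoc, ← ENNReal.tsum_mul_left,
    ← ENNReal.tsum_mul_left]
  apply ENNReal.tsum_le_tsum
  intro c
  have h0 : x.1 0 = y.1 0 := hxy 0 hm
  by_cases hA : Adj c (x.1 0)
  · have hA' : Adj c (y.1 0) := h0 ▸ hA
    set X := consM Adj c x hA with hX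
    set Y := consM Adj c y hA' with hY
    have hagree : ∀ i < m + 1, X.1 i = Y.1 i := by
      intro i hi
      cases i with
      | zero => rfl
      | succ j => exact hxy j (Nat.lt_of_succ_lt_succ hi)
    have hφle : φ X ≤ Var Adj φ (m + 1) + φ Y := by
      have := abs_sub_le_Var Adj φ hvar (m + 1) hagree
      have h2 := (abs_le.1 this).2
      linarith
    have hexp : ENNReal.ofReal (Real.exp (φ X)) ≤ C * ENNReal.ofReal (Real.exp (φ Y)) := by
      rw [hC, ← ENNReal.ofReal_mul (Real.exp_nonneg _), ← Real.exp_add]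
      exact ENNReal.ofReal_le_ofReal (Real.exp_le_exp.2 hφle)
    have hfle : f X ≤ K * f Y := hf X Y hagree
    have hterm : RT Adj φ f c x ≤ (C * ENNReal.ofReal (Real.exp (φ Y))) * (K * f Y) := by
      rw [RT, dif_pos hA]
      exact mul_le_mul' hexp hfle
    calc RT Adj φ f c x ≤ (C * ENNReal.ofReal (Real.exp (φ Y))) * (K * f Y) := hterm
      _ = C * (K * (ENNReal.ofReal (Real.exp (φ Y)) * f Y)) := by ring
      _ = C * (K * RT Adj φ f c y) := by rw [RT, dif_pos hA']
  · rw [RT, dif_neg hA]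
    exact zero_le

lemma iter_distortion (hvar : SummableVar Adj φ) (f : MShift Adj → ℝ≥0∞)
    (hf0 : ∀ x y : MShift Adj, x.1 0 = y.1 0 → f x = f y) (n : ℕ) :
    ∀ (m : ℕ), 1 ≤ m → ∀ x y : MShift Adj, (∀ i < m, x.1 i = y.1 i) →
      (Ruelle Adj φ)^[n] f x ≤
        ENNReal.ofReal (Real.exp (∑ k ∈ Finset.range n, Var Adj φ (m + 1 + k))) *
          (Ruelle Adj φ)^[n] f y := by
  induction n with
  | zero =>
    intro m hm x y hxy
    simp only [Function.iterate_zero_apply, Finset.range_zero, Finset.sum_empty,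
      Real.exp_zero, ENNReal.ofReal_one, one_mul]
    exact le_of_eq (hf0 x y (hxy 0 hm))
  | succ n ih =>
    intro m hm x y hxy
    rw [Function.iterate_succ_apply']
    have step := ruelle_step Adj φ hvar hm hxy ((Ruelle Adj φ)^[n] f)
      (ENNReal.ofReal (Real.exp (∑ k ∈ Finset.range n, Var Adj φ (m + 2 + k))))
      (fun x' y' h => ih (m + 1) (le_trans hm (Nat.le_succ m)) x' y' h)
    refine le_trans step (le_of_eq ?_)
    congr 1
    rw [← ENNReal.ofReal_mul (Real.exp_nonneg _), ← Real.exp_add]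
    congr 1
    rw [Finset.sum_range_succ']
    have : ∀ k, Var Adj φ (m + 1 + (k + 1)) = Var Adj φ (m + 2 + k) := by
      intro k; congr 1; omega
    rw [Finset.sum_congr rfl (fun k _ => this k), add_comm]

lemma iter_distortion_cyl [Nonempty (MShift Adj)] (hvar : SummableVar Adj φ) (b : S) (n : ℕ)
    {x y : MShift Adj} (h : x.1 0 = y.1 0) :
    (Ruelle Adj φ)^[n] (cylInd Adj b) x ≤
      ENNReal.ofReal (Real.exp (∑' j, Var Adj φ j)) *
        (Ruelle Adj φ)^[n] (cylInd Adj b) y := by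
  have h1 := iter_distortion Adj φ hvar (cylInd Adj b)
    (fun x y hxy => cylInd_agree Adj b hxy) n 1 le_rfl x y
    (fun i hi => by interval_cases i; exact h)
  refine le_trans h1 (mul_le_mul' (ENNReal.ofReal_le_ofReal (Real.exp_le_exp.2 ?_)) le_rfl)
  have himg : ∑ k ∈ Finset.range n, Var Adj φ (1 + 1 + k) =
      ∑ j ∈ Finset.image (fun k => 1 + 1 + k) (Finset.range n), Var Adj φ j := by
    rw [Finset.sum_image (fun a _ b _ hab => by omega)]
  rw [himg]
  exact Summable.sum_le_tsum _ (fun j _ => Var_nonneg Adj φ hvar j) hvar.2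

lemma green_distortion [Nonempty (MShift Adj)] (hvar : SummableVar Adj φ) (lam : ℝ) (b : S)
    {x y : MShift Adj} (h : x.1 0 = y.1 0) :
    Green Adj φ lam (cylInd Adj b) x ≤
      ENNReal.ofReal (Real.exp (∑' j, Var Adj φ j)) * Green Adj φ lam (cylInd Adj b) y := by
  unfold Green
  rw [← ENNReal.tsum_mul_left]
  apply ENNReal.tsum_le_tsum
  intro n
  calc ENNReal.ofReal ((lam ^ n)⁻¹) * (Ruelle Adj φ)^[n] (cylInd Adj b) x
      ≤ ENNReal.ofReal ((lam ^ n)⁻¹) *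
        (ENNReal.ofReal (Real.exp (∑' j, Var Adj φ j)) *
          (Ruelle Adj φ)^[n] (cylInd Adj b) y) :=
        mul_le_mul' le_rfl (iter_distortion_cyl Adj φ hvar b n h)
    _ = ENNReal.ofReal (Real.exp (∑' j, Var Adj φ j)) *
        (ENNReal.ofReal ((lam ^ n)⁻¹) * (Ruelle Adj φ)^[n] (cylInd Adj b) y) := by ring
end D
section E
variable (Adj : S → S → Prop) (φ : MShift Adj → ℝ)

lemma ruelle_mul (f g : MShift Adj → ℝ≥0∞) (x : MShift Adj) :
    Ruelle Adj φ (fun z => f z * g (shiftMap Adj z)) x = Ruelle Adj φ f x * g x := by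
  unfold Ruelle
  rw [← ENNReal.tsum_mul_right]
  apply tsum_congr
  intro y
  simp only [y.2]
  ring

variable [Countable S] [MeasurableSpace S] [MeasurableSingletonClass S]
variable (μ : Measure (MShift Adj)) (lam : ℝ)

lemma conf_iter (hφ : Measurable φ)
    (hconf : ∀ f : MShift Adj → ℝ≥0∞, Measurable f →
      ∫⁻ x, Ruelle Adj φ f x ∂μ = ENNReal.ofReal lam * ∫⁻ x, f x ∂μ)
    (g : MShift Adj → ℝ≥0∞) (hg : Measurable g) (n : ℕ) :
    ∀ f : MShift Adj → ℝ≥0∞, Measurable f →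
      ENNReal.ofReal lam ^ n * ∫⁻ x, f x * g ((shiftMap Adj)^[n] x) ∂μ
        = ∫⁻ x, ((Ruelle Adj φ)^[n] f) x * g x ∂μ := by
  induction n with
  | zero => intro f hf; simp
  | succ n ih =>
    intro f hf
    have hh : Measurable fun z : MShift Adj => g ((shiftMap Adj)^[n] z) :=
      hg.comp ((measurable_shiftMap Adj).iterate n)
    have hF : Measurable fun z : MShift Adj =>
        f z * g ((shiftMap Adj)^[n] (shiftMap Adj z)) :=
      hf.mul (hh.comp (measurable_shiftMap Adj))
    have e1 : ∫⁻ x, f x * g ((shiftMap Adj)^[n + 1] x) ∂μ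
        = ∫⁻ x, f x * g ((shiftMap Adj)^[n] (shiftMap Adj x)) ∂μ := by
      apply lintegral_congr
      intro x
      rw [Function.iterate_succ_apply]
    have e2 := hconf (fun z => f z * g ((shiftMap Adj)^[n] (shiftMap Adj z))) hF
    have e3 : ∫⁻ x, Ruelle Adj φ
          (fun z => f z * g ((shiftMap Adj)^[n] (shiftMap Adj z))) x ∂μ
        = ∫⁻ x, Ruelle Adj φ f x * g ((shiftMap Adj)^[n] x) ∂μ := by
      apply lintegral_congr
      intro x
      exact ruelle_mul Adj φ f (fun w => g ((shiftMap Adj)^[n] w)) x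
    have e4 := ih (Ruelle Adj φ f) (measurable_Ruelle Adj φ f hφ hf)
    calc ENNReal.ofReal lam ^ (n + 1) * ∫⁻ x, f x * g ((shiftMap Adj)^[n + 1] x) ∂μ
        = ENNReal.ofReal lam ^ n *
          (ENNReal.ofReal lam * ∫⁻ x, f x * g ((shiftMap Adj)^[n] (shiftMap Adj x)) ∂μ) := by
          rw [e1, pow_succ, mul_assoc]
      _ = ENNReal.ofReal lam ^ n *
          ∫⁻ x, Ruelle Adj φ f x * g ((shiftMap Adj)^[n] x) ∂μ := by rw [← e2, e3]
      _ = ∫⁻ x, ((Ruelle Adj φ)^[n] (Ruelle Adj φ f)) x * g x ∂μ := e4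
      _ = ∫⁻ x, ((Ruelle Adj φ)^[n + 1] f) x * g x ∂μ := by
          apply lintegral_congr
          intro x
          rw [Function.iterate_succ_apply]
end E
section F
variable (Adj : S → S → Prop)

lemma isCompact_cylA [TopologicalSpace S] [DiscreteTopology S] (hloc : LocFin Adj) (b : S) :
    IsCompact (cylA Adj b) := by
  set Fs : ℕ → Set S := fun n => Nat.rec {b} (fun _ s => ⋃ c ∈ s, {d | Adj c d}) n with hFsdef
  have hFs : ∀ n, (Fs n).Finite := by
    intro n
    induction n with
    | zero => exact Set.finite_singleton b
    | succ n ih => exact Set.Finite.biUnion ih (fun c _ => hloc c)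
  have hmem : ∀ x : MShift Adj, x ∈ cylA Adj b → ∀ i, x.1 i ∈ Fs i := by
    intro x hx i
    induction i with
    | zero => exact hx
    | succ i ih => exact Set.mem_biUnion ih (x.2 i)
  rw [Subtype.isCompact_iff]
  have himg : Subtype.val '' cylA Adj b =
      (⋂ i : ℕ, {u : ℕ → S | Adj (u i) (u (i + 1))}) ∩ {u : ℕ → S | u 0 = b} := by
    apply Set.Subset.antisymm
    · rintro u ⟨x, hx, rfl⟩
      exact ⟨Set.mem_iInter.2 fun i => x.2 i, hx⟩
    · rintro u ⟨h1, h2⟩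
      exact ⟨⟨u, fun i => Set.mem_iInter.1 h1 i⟩, h2, rfl⟩
  rw [himg]
  apply IsCompact.of_isClosed_subset (isCompact_univ_pi (fun i => (hFs i).isCompact))
  · apply IsClosed.inter
    · apply isClosed_iInter
      intro i
      have hcont : Continuous fun u : ℕ → S => (u i, u (i + 1)) :=
        Continuous.prodMk (continuous_apply i) (continuous_apply (i + 1))
      exact IsClosed.preimage hcont (isClosed_discrete {p : S × S | Adj p.1 p.2})
    · exact IsClosed.preimage (continuous_apply 0) (isClosed_singleton)
  · rintro u ⟨h1, h2⟩
    exact Set.mem_univ_pi.2 (hmem ⟨u, fun i => Set.mem_iInter.1 h1 i⟩ h2)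

variable (φ : MShift Adj → ℝ)
variable [Countable S] [MeasurableSpace S] [MeasurableSingletonClass S]

lemma measurableSet_cylA (a : S) : MeasurableSet (cylA Adj a) :=
  measurable_evalM Adj 0 (measurableSet_allS {a})

lemma measurable_cylInd (a : S) : Measurable (cylInd Adj a) :=
  Measurable.indicator measurable_const (measurableSet_cylA Adj a)

lemma cylInd_of_mem {a : S} {x : MShift Adj} (h : x ∈ cylA Adj a) : cylInd Adj a x = 1 := by
  unfold cylInd
  rw [Set.indicator_of_mem h]
  rfl

lemma cylInd_of_not_mem {a : S} {x : MShift Adj} (h : x ∉ cylA Adj a) : cylInd Adj a x = 0 := by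
  unfold cylInd
  rw [Set.indicator_of_notMem h]

lemma lintegral_cylInd (μ : Measure (MShift Adj)) (a : S) :
    ∫⁻ x, cylInd Adj a x ∂μ = μ (cylA Adj a) :=
  lintegral_indicator_one (measurableSet_cylA Adj a)

lemma key_summable [TopologicalSpace S] [DiscreteTopology S] [Nonempty (MShift Adj)]
    (hloc : LocFin Adj) (hvar : SummableVar Adj φ) (lam : ℝ) (hlam : 0 < lam)
    (htransient : Transient Adj φ lam) (μ : Measure (MShift Adj))
    (hRadon : ∀ K : Set (MShift Adj), IsCompact K → μ K ≠ ⊤)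
    (hconf : ∀ f : MShift Adj → ℝ≥0∞, Measurable f →
      ∫⁻ x, Ruelle Adj φ f x ∂μ = ENNReal.ofReal lam * ∫⁻ x, f x ∂μ)
    (hφ : Measurable φ) (a b : S) :
    ∑' n : ℕ, μ (cylA Adj b ∩ (shiftMap Adj)^[n] ⁻¹' cylA Adj a) ≠ ⊤ := by
  have hma := measurableSet_cylA Adj a
  have hmb := measurableSet_cylA Adj b
  have hca := measurable_cylInd Adj a
  have hcb := measurable_cylInd Adj b
  have hs : ∀ n : ℕ, MeasurableSet (cylA Adj b ∩ (shiftMap Adj)^[n] ⁻¹' cylA Adj a) :=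
    fun n => hmb.inter (((measurable_shiftMap Adj).iterate n) hma)
  have hLn : ∀ n : ℕ, Measurable ((Ruelle Adj φ)^[n] (cylInd Adj b)) :=
    fun n => measurable_iterRuelle Adj φ (cylInd Adj b) hφ hcb n
  -- each measure as an integral
  have hprod : ∀ n : ℕ, μ (cylA Adj b ∩ (shiftMap Adj)^[n] ⁻¹' cylA Adj a)
      = ∫⁻ x, cylInd Adj b x * cylInd Adj a ((shiftMap Adj)^[n] x) ∂μ := by
    intro n
    rw [← lintegral_indicator_one (hs n)]
    apply lintegral_congr
    intro x
    by_cases hb : x ∈ cylA Adj b <;>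
      by_cases ha : (shiftMap Adj)^[n] x ∈ cylA Adj a <;>
      simp [cylInd, Set.indicator, hb, ha, Set.mem_inter_iff]
  have hiter : ∀ n : ℕ, ENNReal.ofReal lam ^ n *
        ∫⁻ x, cylInd Adj b x * cylInd Adj a ((shiftMap Adj)^[n] x) ∂μ
      = ∫⁻ x, ((Ruelle Adj φ)^[n] (cylInd Adj b)) x * cylInd Adj a x ∂μ :=
    fun n => conf_iter Adj φ μ lam hφ hconf (cylInd Adj a) hca n (cylInd Adj b) hcb
  have hc0 : ENNReal.ofReal lam ≠ 0 := (ENNReal.ofReal_pos.2 hlam).ne'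
  have hct : ENNReal.ofReal lam ≠ ⊤ := ENNReal.ofReal_ne_top
  have hmeas_eq : ∀ n : ℕ, μ (cylA Adj b ∩ (shiftMap Adj)^[n] ⁻¹' cylA Adj a)
      = ENNReal.ofReal ((lam ^ n)⁻¹) *
        ∫⁻ x, ((Ruelle Adj φ)^[n] (cylInd Adj b)) x * cylInd Adj a x ∂μ := by
    intro n
    have hx : ENNReal.ofReal ((lam ^ n)⁻¹) = (ENNReal.ofReal lam ^ n)⁻¹ := by
      rw [ENNReal.ofReal_inv_of_pos (pow_pos hlam n)]
      congr 1
      exact ENNReal.ofReal_pow hlam.le n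
    rw [← hiter n, ← hprod n, hx, ← mul_assoc,
      ENNReal.inv_mul_cancel (pow_ne_zero n hc0) (pow_ne_top hct), one_mul]
  have htsum_eq : ∑' n : ℕ, μ (cylA Adj b ∩ (shiftMap Adj)^[n] ⁻¹' cylA Adj a)
      = ∫⁻ x, Green Adj φ lam (cylInd Adj b) x * cylInd Adj a x ∂μ := by
    rw [tsum_congr hmeas_eq]
    have hswap : ∀ n : ℕ, ENNReal.ofReal ((lam ^ n)⁻¹) *
          ∫⁻ x, ((Ruelle Adj φ)^[n] (cylInd Adj b)) x * cylInd Adj a x ∂μ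
        = ∫⁻ x, ENNReal.ofReal ((lam ^ n)⁻¹) *
            (((Ruelle Adj φ)^[n] (cylInd Adj b)) x * cylInd Adj a x) ∂μ := by
      intro n
      rw [lintegral_const_mul (f := fun x => ((Ruelle Adj φ)^[n] (cylInd Adj b)) x * cylInd Adj a x) _
        ((hLn n).mul hca)]
    rw [tsum_congr hswap, ← lintegral_tsum (f := fun n x => ENNReal.ofReal ((lam ^ n)⁻¹) *
        (((Ruelle Adj φ)^[n] (cylInd Adj b)) x * cylInd Adj a x))
      (fun n => (measurable_const.mul ((hLn n).mul hca)).aemeasurable)]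
    apply lintegral_congr
    intro x
    rw [Green, ← ENNReal.tsum_mul_right]
    apply tsum_congr
    intro n
    ring
  rw [htsum_eq]
  by_cases hne : ∀ x : MShift Adj, x ∉ cylA Adj a
  · have hz : ∀ x, Green Adj φ lam (cylInd Adj b) x * cylInd Adj a x = 0 := by
      intro x
      rw [cylInd_of_not_mem Adj (hne x), mul_zero]
    rw [lintegral_congr hz, lintegral_zero]
    exact ENNReal.zero_ne_top
  · push_neg at hne
    obtain ⟨x₀, hx₀⟩ := hne
    set C := ENNReal.ofReal (Real.exp (∑' j, Var Adj φ j)) with hCdef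
    set G₀ := Green Adj φ lam (cylInd Adj b) x₀ with hG₀def
    have hbound : ∀ x, Green Adj φ lam (cylInd Adj b) x * cylInd Adj a x
        ≤ (C * G₀) * cylInd Adj a x := by
      intro x
      by_cases hx : x ∈ cylA Adj a
      · have h0 : x.1 0 = x₀.1 0 := hx.trans hx₀.symm
        exact mul_le_mul' (green_distortion Adj φ hvar lam b h0) le_rfl
      · rw [cylInd_of_not_mem Adj hx, mul_zero, mul_zero]
    apply ne_top_of_le_ne_top
      (ENNReal.mul_ne_top (ENNReal.mul_ne_top ENNReal.ofReal_ne_top (htransient b x₀))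
        (hRadon _ (isCompact_cylA Adj hloc a)))
    calc ∫⁻ x, Green Adj φ lam (cylInd Adj b) x * cylInd Adj a x ∂μ
        ≤ ∫⁻ x, (C * G₀) * cylInd Adj a x ∂μ := lintegral_mono hbound
      _ = (C * G₀) * μ (cylA Adj a) := by
          rw [lintegral_const_mul _ hca, lintegral_cylInd]
end F
/-- For a `λ`-transient potential, every `λ`-conformal Radon measure gives zero mass to the
set of points returning infinitely often to a fixed compact set `F`. -/
theorem conformal_dissipative_on_compacts [Countable S] [MeasurableSpace S]
    [MeasurableSingletonClass S] [TopologicalSpace S] [DiscreteTopology S]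
    (Adj : S → S → Prop) (htrans : TransitiveShift Adj) (hloc : LocFin Adj)
    (φ : MShift Adj → ℝ) (hvar : SummableVar Adj φ) (lam : ℝ) (hlam : 0 < lam)
    (htransient : Transient Adj φ lam)
    (μ : Measure (MShift Adj))
    (hRadon : ∀ K : Set (MShift Adj), IsCompact K → μ K ≠ ⊤)
    (hconf : ∀ f : MShift Adj → ℝ≥0∞, Measurable f →
      ∫⁻ x, Ruelle Adj φ f x ∂μ = ENNReal.ofReal lam * ∫⁻ x, f x ∂μ)
    (F : Set (MShift Adj)) (hF : IsCompact F) :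
    μ (visitsInfinitelyOften Adj F) = 0 := by
  rcases isEmpty_or_nonempty (MShift Adj) with hE | hNE
  · rw [Set.eq_empty_of_isEmpty (visitsInfinitelyOften Adj F)]
    exact measure_empty
  have hφ : Measurable φ := measurable_phi Adj φ hvar
  -- each cylinder is visited infinitely often only by a null set
  have hVIOa : ∀ a : S, μ (visitsInfinitelyOften Adj (cylA Adj a)) = 0 := by
    intro a
    have hcover : visitsInfinitelyOften Adj (cylA Adj a) ⊆
        ⋃ b : S, cylA Adj b ∩ visitsInfinitelyOften Adj (cylA Adj a) := fun x hx =>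
      Set.mem_iUnion.2 ⟨x.1 0, rfl, hx⟩
    refine measure_mono_null hcover (measure_iUnion_null fun b => ?_)
    have hsub : cylA Adj b ∩ visitsInfinitelyOften Adj (cylA Adj a) ⊆
        limsup (fun n => cylA Adj b ∩ (shiftMap Adj)^[n] ⁻¹' cylA Adj a) atTop := by
      rintro x ⟨hxb, hxv⟩
      rw [mem_limsup_iff_frequently_mem, frequently_atTop]
      intro N
      obtain ⟨n, hn, h⟩ := hxv N
      exact ⟨n, hn, hxb, h⟩
    exact measure_mono_null hsub (measure_limsup_atTop_eq_zero
      (key_summable Adj φ hloc hvar lam hlam htransient μ hRadon hconf hφ a b))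
  -- cover the compact set by finitely many cylinders
  set A : Set S := (fun x : MShift Adj => x.1 0) '' F with hAdef
  have hAfin : A.Finite :=
    (hF.image ((continuous_apply 0).comp continuous_subtype_val)).finite_of_discrete
  have hVsub : visitsInfinitelyOften Adj F ⊆
      ⋃ a ∈ A, visitsInfinitelyOften Adj (cylA Adj a) := by
    intro x hx
    by_contra hcon
    rw [Set.mem_iUnion₂] at hcon
    push_neg at hcon
    have hfreq : ∃ᶠ n in atTop, (shiftMap Adj)^[n] x ∈ F := frequently_atTop.2 hx
    have hev : ∀ a ∈ A, ∀ᶠ n in atTop, (shiftMap Adj)^[n] x ∉ cylA Adj a := by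
      intro a ha
      have hna := hcon a ha
      simp only [visitsInfinitelyOften, Set.mem_setOf_eq, not_forall] at hna
      obtain ⟨N, hN⟩ := hna
      push_neg at hN
      exact eventually_atTop.2 ⟨N, fun n hn => hN n hn⟩
    have hall : ∀ᶠ n in atTop, ∀ a ∈ A, (shiftMap Adj)^[n] x ∉ cylA Adj a :=
      (eventually_all_finite hAfin).2 hev
    obtain ⟨n, hnF, hnA⟩ := (hfreq.and_eventually hall).exists
    exact hnA (((shiftMap Adj)^[n] x).1 0) ⟨(shiftMap Adj)^[n] x, hnF, rfl⟩ rfl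
  exact measure_mono_null hVsub
    ((measure_biUnion_null_iff hAfin.countable).2 fun a _ => hVIOa a)
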